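/- arXiv:1111.5057 — 6 statements merged into one kernel-verified Lean document; each statement's English description precedes it below -/
import Mathlib

section
/- Let ρ be an N×N positive semidefinite complex matrix with trace 1 (a density matrix), and let Z₁,…,Z_m be Hermitian N×N complex matrices. Define the means d_i = Tr(ρ Z_i) (which are real), the centered matrices Ẑ_i = Z_i − d_i·I, the real symmetric m×m matrix γ with entries γ_{ij} = Tr(ρ(Ẑ_i Ẑ_j + Ẑ_j Ẑ_i)), and the real antisymmetric m×m matrix C with entries C_{ij} = −i·Tr(ρ(Ẑ_i Ẑ_j − Ẑ_j Ẑ_i)). Then the Hermitian m×m matrix γ + iC is positive semidefinite. -/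
open scoped ComplexOrder
open Matrix
open scoped MatrixOrder

/-- Robertson–Schrödinger uncertainty relation in matrix form: for a density matrix ρ
and Hermitian observables Z₁,…,Z_m, the matrix γ + iC is positive semidefinite, where
γ is the (real, symmetric) covariance matrix and C the (real, antisymmetric) commutator
matrix of the centered observables. -/
theorem uncertainty_relation_matrix_form {N m : ℕ}
    (ρ : Matrix (Fin N) (Fin N) ℂ) (hρ : ρ.PosSemidef) (hρtr : ρ.trace = 1)
    (Z : Fin m → Matrix (Fin N) (Fin N) ℂ) (hZ : ∀ i, (Z i).IsHermitian)
    (d : Fin m → ℝ) (hd : ∀ i, (d i : ℂ) = (ρ * Z i).trace)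
    (Zc : Fin m → Matrix (Fin N) (Fin N) ℂ)
    (hZc : ∀ i, Zc i = Z i - (d i : ℂ) • (1 : Matrix (Fin N) (Fin N) ℂ))
    (γ C : Matrix (Fin m) (Fin m) ℝ)
    (hγ : ∀ i j, (γ i j : ℂ) = (ρ * (Zc i * Zc j + Zc j * Zc i)).trace)
    (hC : ∀ i j, (C i j : ℂ) = -Complex.I * (ρ * (Zc i * Zc j - Zc j * Zc i)).trace) :
    (γ.map Complex.ofReal + Complex.I • C.map Complex.ofReal).PosSemidef := by
  set S := CFC.sqrt ρ with hSdef
  have hS : S * S = ρ := CFC.sqrt_mul_sqrt_self ρ hρ.nonneg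
  have hSH : Sᴴ = S := (CFC.sqrt_nonneg ρ).posSemidef.isHermitian
  have hZcH : ∀ i, (Zc i)ᴴ = Zc i := by
    intro i
    rw [hZc]
    simp only [Matrix.conjTranspose_sub, Matrix.conjTranspose_smul, Matrix.conjTranspose_one,
      Complex.star_def, Complex.conj_ofReal, (hZ i).eq]
  set B : Matrix (Fin m) (Fin N × Fin N) ℂ := fun i p => (S * Zc i) p.1 p.2 with hB
  have key : ∀ i j, (B * Bᴴ) i j = (ρ * (Zc i * Zc j)).trace := by
    intro i j
    have h1 : (B * Bᴴ) i j = ((S * Zc i) * (S * Zc j)ᴴ).trace := by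
      rw [Matrix.mul_apply, Matrix.trace]
      simp only [Matrix.diag_apply, Matrix.mul_apply, Matrix.conjTranspose_apply, hB]
      rw [Fintype.sum_prod_type]
      rfl
    rw [h1, Matrix.conjTranspose_mul, hSH, hZcH]
    have h2 : S * Zc i * (Zc j * S) = S * (Zc i * Zc j) * S := by
      simp only [Matrix.mul_assoc]
    rw [h2, Matrix.trace_mul_cycle, ← Matrix.mul_assoc, hS, Matrix.mul_assoc]
  have hM : γ.map Complex.ofReal + Complex.I • C.map Complex.ofReal = B * Bᴴ + B * Bᴴ := by
    ext i j
    simp only [Matrix.add_apply, Matrix.smul_apply, Matrix.map_apply, smul_eq_mul, key]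
    rw [hγ, hC]
    simp only [Matrix.mul_add, Matrix.mul_sub, Matrix.trace_add, Matrix.trace_sub]
    ring_nf
    rw [Complex.I_sq]
    ring
  rw [hM]
  exact (Matrix.posSemidef_self_mul_conjTranspose B).add
    (Matrix.posSemidef_self_mul_conjTranspose B)
end

section
/- Let Σ_A and Σ_B be the standard symplectic form matrices of sizes 2n×2n and 2m×2m respectively, and let λ > 0. Let γ_AB = [[γ_A, X],[Xᵀ, γ_B]] be a real symmetric block matrix with γ_AB + iλ·diag(Σ_A, Σ_B) positive semidefinite, and let γ'_A be a real symmetric 2n×2n matrix with γ'_A + iλΣ_A positive semidefinite. Assume additionally that γ'_A + γ_A is invertible. Then the matrix γ'_B := γ_B − Xᵀ(γ'_A + γ_A)^{−1}X satisfies: γ'_B + iλΣ_B is positive semidefinite. -/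
open Matrix
open scoped ComplexOrder

/-- The standard 2n×2n symplectic form matrix: block diagonal with n blocks
[[0,-1],[1,0]]. -/
def stdSymp (n : ℕ) : Matrix (Fin (2 * n)) (Fin (2 * n)) ℝ :=
  Matrix.of fun i j =>
    if (j : ℕ) = (i : ℕ) + 1 ∧ (i : ℕ) % 2 = 0 then -1
    else if (i : ℕ) = (j : ℕ) + 1 ∧ (j : ℕ) % 2 = 0 then 1
    else 0

lemma stdSymp_transpose (k : ℕ) : (stdSymp k)ᵀ = -(stdSymp k) := by
  ext i j
  simp only [stdSymp, transpose_apply, of_apply, Matrix.neg_apply]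
  split_ifs with h1 h2
  · omega
  · norm_num
  · norm_num
  · norm_num

lemma map_conjTranspose_real {p q : Type*} (M : Matrix p q ℝ) :
    (M.map Complex.ofReal)ᴴ = Mᵀ.map Complex.ofReal := by
  ext i j
  simp [conjTranspose_apply, Complex.conj_ofReal]

lemma map_neg_real {p q : Type*} (M : Matrix p q ℝ) :
    (-M).map Complex.ofReal = -(M.map Complex.ofReal) := by
  ext i j; simp

lemma map_mul_real {p q r : Type*} [Fintype q] (M : Matrix p q ℝ) (N : Matrix q r ℝ) :
    (M * N).map Complex.ofReal = M.map Complex.ofReal * N.map Complex.ofReal :=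
  Matrix.map_mul (f := Complex.ofRealHom)

lemma map_add_real {p q : Type*} (M N : Matrix p q ℝ) :
    (M + N).map Complex.ofReal = M.map Complex.ofReal + N.map Complex.ofReal :=
  Matrix.map_add _ (fun a b => by push_cast; ring) M N

lemma map_zero_real {p q : Type*} :
    (0 : Matrix p q ℝ).map Complex.ofReal = 0 :=
  Matrix.map_zero _ Complex.ofReal_zero

/-- Gaussian measurement updates preserve the classical uncertainty principle: if the
bipartite covariance matrix [[γA, X],[Xᵀ, γB]] satisfies the CUP, and the indicator
function covariance matrix γ'A satisfies the CUP, then the Schur complement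
γ'B = γB − Xᵀ(γ'A + γA)⁻¹X also satisfies the CUP. -/
theorem measurement_update_preserves_CUP {n m : ℕ} (lam : ℝ) (hlam : 0 < lam)
    (γA γ'A : Matrix (Fin (2 * n)) (Fin (2 * n)) ℝ)
    (γB : Matrix (Fin (2 * m)) (Fin (2 * m)) ℝ)
    (X : Matrix (Fin (2 * n)) (Fin (2 * m)) ℝ)
    (hA : γA.IsSymm) (hB : γB.IsSymm) (hA' : γ'A.IsSymm)
    (hAB : ((Matrix.fromBlocks γA X Xᵀ γB).map Complex.ofReal +
        (Complex.I * (lam : ℂ)) •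
          (Matrix.fromBlocks (stdSymp n) 0 0 (stdSymp m)).map Complex.ofReal).PosSemidef)
    (hA'cup : (γ'A.map Complex.ofReal +
        (Complex.I * (lam : ℂ)) • (stdSymp n).map Complex.ofReal).PosSemidef)
    (hinv : IsUnit (γ'A + γA)) :
    ((γB - Xᵀ * (γ'A + γA)⁻¹ * X).map Complex.ofReal +
        (Complex.I * (lam : ℂ)) • (stdSymp m).map Complex.ofReal).PosSemidef := by
  set μ : ℂ := Complex.I * (lam : ℂ) with hμ
  set C := Complex.ofReal with hC
  -- conjugate of the indicator CUP condition
  have hA'conj : (γ'A.map C - μ • (stdSymp n).map C).PosSemidef := by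
    have ht := hA'cup.transpose
    have e : (γ'A.map C + μ • (stdSymp n).map C)ᵀ
        = γ'A.map C - μ • (stdSymp n).map C := by
      rw [transpose_add, transpose_smul, ← Matrix.transpose_map, ← Matrix.transpose_map,
        hA'.eq, stdSymp_transpose, map_neg_real]
      rw [smul_neg]; abel
    rwa [e] at ht
  -- rewrite hAB in block form
  have hAB' : (Matrix.fromBlocks (γA.map C + μ • (stdSymp n).map C) (X.map C)
      (Xᵀ.map C) (γB.map C + μ • (stdSymp m).map C)).PosSemidef := by
    have e : (Matrix.fromBlocks γA X Xᵀ γB).map C +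
        μ • (Matrix.fromBlocks (stdSymp n) 0 0 (stdSymp m)).map C
        = Matrix.fromBlocks (γA.map C + μ • (stdSymp n).map C) (X.map C)
          (Xᵀ.map C) (γB.map C + μ • (stdSymp m).map C) := by
      rw [Matrix.fromBlocks_map, Matrix.fromBlocks_map, Matrix.fromBlocks_smul,
        Matrix.fromBlocks_add, Matrix.fromBlocks_inj]
      refine ⟨rfl, ?_, ?_, rfl⟩ <;> rw [map_zero_real] <;> simp
    rwa [e] at hAB
  -- embed the indicator into the big space
  have hQ : (Matrix.fromBlocks (γ'A.map C - μ • (stdSymp n).map C) 0 0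
      (0 : Matrix (Fin (2 * m)) (Fin (2 * m)) ℂ)).PosSemidef := by
    have h := hA'conj.conjTranspose_mul_mul_same
      (fromCols (1 : Matrix (Fin (2 * n)) (Fin (2 * n)) ℂ)
        (0 : Matrix (Fin (2 * n)) (Fin (2 * m)) ℂ))
    rw [conjTranspose_fromCols_eq_fromRows_conjTranspose, fromRows_mul,
      fromRows_mul_fromCols] at h
    simpa using h
  -- sum
  have hSum : (Matrix.fromBlocks ((γ'A + γA).map C) (X.map C)
      ((X.map C)ᴴ) (γB.map C + μ • (stdSymp m).map C)).PosSemidef := by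
    have h := hAB'.add hQ
    have e : Matrix.fromBlocks (γA.map C + μ • (stdSymp n).map C) (X.map C)
          (Xᵀ.map C) (γB.map C + μ • (stdSymp m).map C) +
        Matrix.fromBlocks (γ'A.map C - μ • (stdSymp n).map C) 0 0 0
        = Matrix.fromBlocks ((γ'A + γA).map C) (X.map C)
          ((X.map C)ᴴ) (γB.map C + μ • (stdSymp m).map C) := by
      rw [Matrix.fromBlocks_add, map_conjTranspose_real, Matrix.fromBlocks_inj]
      refine ⟨?_, add_zero _, add_zero _, add_zero _⟩
      rw [map_add_real]
      abel
    rwa [e] at h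
  set S : Matrix (Fin (2 * n)) (Fin (2 * n)) ℂ := (γ'A + γA).map C with hS
  -- S is invertible
  have hSunit : IsUnit S := by
    have h := hinv.map (Complex.ofRealHom.mapMatrix)
    simp only [RingHom.mapMatrix_apply] at h
    rw [hS, hC]
    exact h
  -- S is PSD (the (1,1) block of hSum)
  have hSpsd : S.PosSemidef := by
    have h := hSum.conjTranspose_mul_mul_same
      (fromRows (1 : Matrix (Fin (2 * n)) (Fin (2 * n)) ℂ)
        (0 : Matrix (Fin (2 * m)) (Fin (2 * n)) ℂ))
    rw [conjTranspose_fromRows_eq_fromCols_conjTranspose,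
      fromCols_mul_fromBlocks, fromCols_mul_fromRows] at h
    simpa using h
  have hSposdef : S.PosDef := by
    exact hSpsd.posDef_iff_isUnit.mpr hSunit
  haveI : Invertible S := hSunit.invertible
  have key := (Matrix.PosDef.fromBlocks₁₁ (X.map C)
    (γB.map C + μ • (stdSymp m).map C) hSposdef).mp hSum
  -- identify with the goal
  have hinvmap : ((γ'A + γA)⁻¹).map C = S⁻¹ := by
    symm
    apply Matrix.inv_eq_right_inv
    rw [hS, hC, ← map_mul_real,
      Matrix.mul_nonsing_inv _ ((Matrix.isUnit_iff_isUnit_det _).mp hinv)]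
    exact Matrix.map_one _ Complex.ofReal_zero Complex.ofReal_one
  have e : (γB - Xᵀ * (γ'A + γA)⁻¹ * X).map C + μ • (stdSymp m).map C
      = γB.map C + μ • (stdSymp m).map C - (X.map C)ᴴ * S⁻¹ * (X.map C) := by
    rw [hC, Matrix.map_sub _ (fun a b => by push_cast; ring), map_mul_real, map_mul_real,
      hinvmap, map_conjTranspose_real]
    rw [← hC]
    abel
  rwa [e]
end

section
/- Let Σ_A and Σ_E be the standard symplectic form matrices of sizes 2n×2n and 2m×2m respectively, let λ > 0, and let S be a (2n+2m)×(2n+2m) real matrix satisfying Sᵀ·diag(Σ_A, Σ_E)·S = diag(Σ_A, Σ_E), with block form S = [[S_AA, S_AE],[S_EA, S_EE]] (S_AA of size 2n×2n). Let γ_E be a real symmetric 2m×2m matrix with γ_E + iλΣ_E positive semidefinite. Set X := S_AA and Y := S_EAᵀ γ_E S_EA. Then the Hermitian matrix Y − iλΣ_A + iλXᵀΣ_A X is positive semidefinite (equivalently, Y ≥ iλΣ_A − iλXᵀΣ_A X). -/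
open Matrix
open scoped ComplexOrder

lemma stdSymp_antisymm (k : ℕ) : (stdSymp k)ᵀ = - stdSymp k := by
  ext i j
  simp only [stdSymp, Matrix.transpose_apply, Matrix.neg_apply, Matrix.of_apply]
  split_ifs <;> first | (exfalso; omega) | norm_num

lemma map_mul' {a b c : Type*} [Fintype b] (M : Matrix a b ℝ) (N : Matrix b c ℝ) :
    (M * N).map Complex.ofReal = M.map Complex.ofReal * N.map Complex.ofReal := by
  ext i j
  simp [Matrix.mul_apply]

/-- Necessity direction of the characterization of valid irreversible transformations:
if S is symplectic on the joint system+environment phase space and the environment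
covariance matrix γ_E satisfies the CUP, then X = S_AA and Y = S_EAᵀ γ_E S_EA satisfy
Y ≥ iλΣ_A − iλXᵀΣ_A X, i.e. Y − iλΣ_A + iλXᵀΣ_A X is positive semidefinite. -/
theorem dilation_necessity {n m : ℕ} (lam : ℝ) (hlam : 0 < lam)
    (SAA : Matrix (Fin (2 * n)) (Fin (2 * n)) ℝ)
    (SAE : Matrix (Fin (2 * n)) (Fin (2 * m)) ℝ)
    (SEA : Matrix (Fin (2 * m)) (Fin (2 * n)) ℝ)
    (SEE : Matrix (Fin (2 * m)) (Fin (2 * m)) ℝ)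
    (hS : (Matrix.fromBlocks SAA SAE SEA SEE)ᵀ *
        Matrix.fromBlocks (stdSymp n) 0 0 (stdSymp m) *
        Matrix.fromBlocks SAA SAE SEA SEE =
        Matrix.fromBlocks (stdSymp n) 0 0 (stdSymp m))
    (γE : Matrix (Fin (2 * m)) (Fin (2 * m)) ℝ) (hγE : γE.IsSymm)
    (hγEcup : (γE.map Complex.ofReal +
        (Complex.I * (lam : ℂ)) • (stdSymp m).map Complex.ofReal).PosSemidef) :
    ((SEAᵀ * γE * SEA).map Complex.ofReal -
        (Complex.I * (lam : ℂ)) • (stdSymp n).map Complex.ofReal +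
        (Complex.I * (lam : ℂ)) •
          (SAAᵀ * stdSymp n * SAA).map Complex.ofReal).PosSemidef := by
  -- block (1,1) of the symplectic condition
  have h1 : SAAᵀ * stdSymp n * SAA + SEAᵀ * stdSymp m * SEA = stdSymp n := by
    rw [Matrix.fromBlocks_transpose, Matrix.fromBlocks_multiply,
      Matrix.fromBlocks_multiply] at hS
    have := congrArg Matrix.toBlocks₁₁ hS
    simpa [Matrix.toBlocks_fromBlocks₁₁, Matrix.mul_assoc] using this
  have h2 : SAAᵀ * stdSymp n * SAA = stdSymp n - SEAᵀ * stdSymp m * SEA := by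
    rw [eq_sub_iff_add_eq]; exact h1
  -- the conjugated CUP
  have hM' : (γE.map Complex.ofReal -
      (Complex.I * (lam : ℂ)) • (stdSymp m).map Complex.ofReal).PosSemidef := by
    have ht := hγEcup.transpose
    have heq : (γE.map Complex.ofReal +
        (Complex.I * (lam : ℂ)) • (stdSymp m).map Complex.ofReal)ᵀ =
        γE.map Complex.ofReal -
        (Complex.I * (lam : ℂ)) • (stdSymp m).map Complex.ofReal := by
      rw [Matrix.transpose_add, Matrix.transpose_smul, ← Matrix.transpose_map,
        ← Matrix.transpose_map, hγE.eq, stdSymp_antisymm,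
        show ((-stdSymp m).map Complex.ofReal) = -((stdSymp m).map Complex.ofReal) from by
          ext i j; simp, smul_neg, sub_eq_add_neg]
    rwa [heq] at ht
  have key := hM'.conjTranspose_mul_mul_same (SEA.map Complex.ofReal)
  have hB : (SEA.map Complex.ofReal)ᴴ = SEAᵀ.map Complex.ofReal := by
    ext i j
    simp [Matrix.conjTranspose_apply]
  rw [hB] at key
  have hexp : SEAᵀ.map Complex.ofReal *
      (γE.map Complex.ofReal -
        (Complex.I * (lam : ℂ)) • (stdSymp m).map Complex.ofReal) *
      SEA.map Complex.ofReal =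
      (SEAᵀ * γE * SEA).map Complex.ofReal -
        (Complex.I * (lam : ℂ)) • (stdSymp n).map Complex.ofReal +
        (Complex.I * (lam : ℂ)) •
          (SAAᵀ * stdSymp n * SAA).map Complex.ofReal := by
    rw [h2]
    have e1 : (SEAᵀ * γE * SEA).map Complex.ofReal =
        SEAᵀ.map Complex.ofReal * γE.map Complex.ofReal * SEA.map Complex.ofReal := by
      rw [map_mul', map_mul']
    have e2 : (SEAᵀ * stdSymp m * SEA).map Complex.ofReal =
        SEAᵀ.map Complex.ofReal * (stdSymp m).map Complex.ofReal *
          SEA.map Complex.ofReal := by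
      rw [map_mul', map_mul']
    rw [Matrix.map_sub _ (by simp [sub_eq_add_neg])]
    · rw [e1, e2, Matrix.mul_sub, Matrix.sub_mul, Matrix.mul_smul, Matrix.smul_mul,
        smul_sub]
      abel
  rwa [hexp] at key
end

section
/- Let λ > 0 and r ∈ ℝ, and for a system of n degrees of freedom define the diagonal 2n×2n real matrices D₊(r) = cosh(2r)·diag(1, λ², 1, λ², …) and D₋(r) = sinh(2r)·diag(1, −λ², 1, −λ², …), and let Σ be the standard 2n×2n symplectic form matrix. Then for every r, the Hermitian matrix [[D₊(r), D₋(r)],[D₋(r), D₊(r)]] + iλ·diag(Σ, Σ) is positive semidefinite. -/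
open Matrix
open scoped ComplexOrder

/-- D₊(r) = cosh(2r)·diag(1, λ², 1, λ², …). -/
noncomputable def Dplus (n : ℕ) (lam r : ℝ) : Matrix (Fin (2 * n)) (Fin (2 * n)) ℝ :=
  Real.cosh (2 * r) • Matrix.diagonal (fun i : Fin (2 * n) => if (i : ℕ) % 2 = 0 then 1 else lam ^ 2)

/-- D₋(r) = sinh(2r)·diag(1, −λ², 1, −λ², …). -/
noncomputable def Dminus (n : ℕ) (lam r : ℝ) : Matrix (Fin (2 * n)) (Fin (2 * n)) ℝ :=
  Real.sinh (2 * r) • Matrix.diagonal (fun i : Fin (2 * n) => if (i : ℕ) % 2 = 0 then 1 else -lam ^ 2)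

/-- auxiliary pairing matrix -/
def Pmat (n : ℕ) : Matrix (Fin (2 * n)) (Fin (2 * n)) ℂ :=
  Matrix.of fun i j => if (i : ℕ) = (j : ℕ) + 1 ∧ (j : ℕ) % 2 = 0 then 1 else 0

lemma Pmat_conjTranspose (n : ℕ) : (Pmat n)ᴴ = (Pmat n)ᵀ := by
  ext i j
  simp only [conjTranspose_apply, transpose_apply, Pmat, of_apply]
  split <;> simp

lemma PtP (n : ℕ) : (Pmat n)ᵀ * Pmat n
    = Matrix.diagonal (fun i : Fin (2*n) => if (i:ℕ) % 2 = 0 then (1:ℂ) else 0) := by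
  ext i j
  rw [Matrix.mul_apply]
  by_cases hij : i = j
  · subst hij
    by_cases hi : (i:ℕ) % 2 = 0
    · have hlt : (i:ℕ) + 1 < 2 * n := by have := i.isLt; omega
      rw [Finset.sum_eq_single (⟨(i:ℕ)+1, hlt⟩ : Fin (2*n))]
      · simp [Pmat, hi, Matrix.diagonal_apply_eq]
      · intro k _ hk
        have hk' : (k:ℕ) ≠ (i:ℕ) + 1 := fun h => hk (Fin.ext h)
        simp [Pmat, transpose_apply, hk']
      · exact fun h => absurd (Finset.mem_univ _) h
    · rw [Finset.sum_eq_zero]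
      · simp [Matrix.diagonal_apply_eq, hi]
      · intro k _
        simp [Pmat, transpose_apply, hi]
  · rw [Finset.sum_eq_zero]
    · simp [Matrix.diagonal_apply_ne _ hij]
    · intro k _
      have : ¬((k:ℕ) = (i:ℕ)+1 ∧ (i:ℕ)%2 = 0) ∨ ¬((k:ℕ) = (j:ℕ)+1 ∧ (j:ℕ)%2 = 0) := by
        by_contra h
        push_neg at h
        obtain ⟨h1, h2⟩ := h
        exact hij (Fin.ext (by omega))
      rcases this with h | h <;> simp [Pmat, transpose_apply, h]

lemma diag_mul_P (n : ℕ) (a b : ℂ) :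
    Matrix.diagonal (fun i : Fin (2*n) => if (i:ℕ) % 2 = 0 then a else b) * Pmat n
      = b • Pmat n := by
  ext i j
  rw [Matrix.diagonal_mul]
  simp only [Pmat, of_apply, Matrix.smul_apply, smul_eq_mul]
  by_cases h : (i:ℕ) = (j:ℕ)+1 ∧ (j:ℕ) % 2 = 0
  · have hi : ¬ (i:ℕ) % 2 = 0 := by omega
    simp [h, hi]
    exact fun hc => absurd hc (by omega)
  · simp [h]

lemma Pt_mul_diag (n : ℕ) (a b : ℂ) :
    (Pmat n)ᵀ * Matrix.diagonal (fun i : Fin (2*n) => if (i:ℕ) % 2 = 0 then a else b)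
      = b • (Pmat n)ᵀ := by
  ext i j
  rw [Matrix.mul_diagonal]
  simp only [transpose_apply, Pmat, of_apply, Matrix.smul_apply, smul_eq_mul]
  by_cases h : (j:ℕ) = (i:ℕ)+1 ∧ (i:ℕ) % 2 = 0
  · have hj : ¬ (j:ℕ) % 2 = 0 := by omega
    simp [h, hj]
    exact fun hc => absurd hc (by omega)
  · simp [h]

lemma symp_map (n : ℕ) : (stdSymp n).map Complex.ofReal = Pmat n - (Pmat n)ᵀ := by
  ext i j
  simp only [Matrix.map_apply, stdSymp, Pmat, Matrix.sub_apply, transpose_apply, of_apply]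
  by_cases h1 : (j:ℕ) = (i:ℕ)+1 ∧ (i:ℕ) % 2 = 0
  · have h2 : ¬((i:ℕ) = (j:ℕ)+1 ∧ (j:ℕ) % 2 = 0) := by omega
    have h3 : ¬((i:ℕ) = (i:ℕ) + 1 + 1 ∧ ((i:ℕ)+1) % 2 = 0) := by omega
    simp [h1, h2, h3]
  · by_cases h2 : (i:ℕ) = (j:ℕ)+1 ∧ (j:ℕ) % 2 = 0
    · have h3 : ¬((j:ℕ) = (j:ℕ) + 1 + 1 ∧ ((j:ℕ)+1) % 2 = 0) := by omega
      simp [h1, h2, h3]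
    · simp [h1, h2]

noncomputable def Kmat (n : ℕ) (lam u : ℝ) : Matrix (Fin (2 * n)) (Fin (2 * n)) ℂ :=
  Matrix.diagonal (fun i : Fin (2*n) => if (i:ℕ) % 2 = 0 then (0:ℂ) else ((lam / u : ℝ) : ℂ))
    + (Complex.I * (u : ℝ)) • Pmat n

lemma KhK (n : ℕ) (lam u : ℝ) (hu : u ≠ 0) :
    (Kmat n lam u)ᴴ * Kmat n lam u
      = Matrix.diagonal (fun i : Fin (2*n) =>
          if (i:ℕ) % 2 = 0 then ((u^2 : ℝ) : ℂ) else ((lam^2 / u^2 : ℝ) : ℂ))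
        + (Complex.I * (lam : ℝ)) • (Pmat n - (Pmat n)ᵀ) := by
  have hKh : (Kmat n lam u)ᴴ
      = Matrix.diagonal (fun i : Fin (2*n) => if (i:ℕ) % 2 = 0 then (0:ℂ) else ((lam / u : ℝ) : ℂ))
        + (-(Complex.I * (u : ℝ))) • (Pmat n)ᵀ := by
    rw [Kmat, conjTranspose_add, conjTranspose_smul, Pmat_conjTranspose,
      diagonal_conjTranspose]
    have hstar : star (fun i : Fin (2*n) => if (i:ℕ) % 2 = 0 then (0:ℂ) else ((lam / u : ℝ) : ℂ))
        = fun i : Fin (2*n) => if (i:ℕ) % 2 = 0 then (0:ℂ) else ((lam / u : ℝ) : ℂ) := by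
      funext i
      by_cases h : (i:ℕ) % 2 = 0 <;> simp [h, Complex.conj_ofReal]
    rw [hstar]
    congr 1
    have : star (Complex.I * ((u:ℝ):ℂ)) = -(Complex.I * ((u:ℝ):ℂ)) := by
      simp [Complex.star_def, Complex.conj_I, Complex.conj_ofReal]
    rw [this]
  rw [hKh, Kmat]
  rw [add_mul, mul_add, mul_add, smul_mul_assoc, smul_mul_assoc, mul_smul_comm, mul_smul_comm,
    diag_mul_P, Pt_mul_diag, PtP, diagonal_mul_diagonal, smul_smul, smul_smul, smul_smul]
  have hc1 : Complex.I * (u:ℝ) * ((lam / u : ℝ) : ℂ) = Complex.I * (lam:ℝ) := by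
    have : ((u:ℝ):ℂ) ≠ 0 := Complex.ofReal_ne_zero.mpr hu
    push_cast
    field_simp
  have hc2 : -(Complex.I * (u:ℝ)) * ((lam / u : ℝ) : ℂ) = -(Complex.I * (lam:ℝ)) := by
    rw [neg_mul, hc1]
  have hc3 : -(Complex.I * (u:ℝ)) * (Complex.I * (u:ℝ)) = ((u^2:ℝ):ℂ) := by
    rw [show -(Complex.I * ((u:ℝ):ℂ)) * (Complex.I * ((u:ℝ):ℂ))
        = -(Complex.I ^ 2 * ((u:ℝ):ℂ) ^ 2) from by ring, Complex.I_sq]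
    push_cast
    ring
  rw [hc1, hc2, hc3]
  have hdiag : Matrix.diagonal (fun i : Fin (2*n) =>
        (if (i:ℕ) % 2 = 0 then (0:ℂ) else ((lam / u : ℝ) : ℂ))
          * (if (i:ℕ) % 2 = 0 then (0:ℂ) else ((lam / u : ℝ) : ℂ)))
      + ((u^2:ℝ):ℂ) • Matrix.diagonal (fun i : Fin (2*n) => if (i:ℕ) % 2 = 0 then (1:ℂ) else 0)
      = Matrix.diagonal (fun i : Fin (2*n) =>
          if (i:ℕ) % 2 = 0 then ((u^2 : ℝ) : ℂ) else ((lam^2 / u^2 : ℝ) : ℂ)) := by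
    rw [← diagonal_smul, diagonal_add]
    refine congrArg Matrix.diagonal (funext fun i => ?_)
    by_cases h : (i:ℕ) % 2 = 0
    · simp [h]
    · have : ((lam/u:ℝ):ℂ) * ((lam/u:ℝ):ℂ) = ((lam^2/u^2:ℝ):ℂ) := by
        push_cast
        ring
      simp only [h, if_false, if_neg h, smul_eq_mul, Pi.smul_apply, mul_zero, add_zero]
      push_cast
      ring
  rw [smul_sub, neg_smul, ← hdiag]
  abel

/-- The covariance matrix [[D₊(r), D₋(r)],[D₋(r), D₊(r)]] of the finitely-squeezed
approximation of the perfectly correlated (EPR) epistemic state satisfies the classical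
uncertainty principle for every squeezing parameter r. -/
theorem squeezed_EPR_satisfies_CUP {n : ℕ} (lam r : ℝ) (hlam : 0 < lam) :
    ((Matrix.fromBlocks (Dplus n lam r) (Dminus n lam r)
          (Dminus n lam r) (Dplus n lam r)).map Complex.ofReal +
        (Complex.I * (lam : ℂ)) •
          (Matrix.fromBlocks (stdSymp n) 0 0 (stdSymp n)).map Complex.ofReal).PosSemidef := by
  have hup : Real.exp r ≠ 0 := Real.exp_ne_zero r
  have hum : Real.exp (-r) ≠ 0 := Real.exp_ne_zero (-r)
  set Kp := Kmat n lam (Real.exp r) with hKp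
  set Km := Kmat n lam (Real.exp (-r)) with hKm
  set V : Matrix (Fin (2*n) ⊕ Fin (2*n)) (Fin (2*n) ⊕ Fin (2*n)) ℂ :=
    Matrix.fromBlocks Kp Kp Km (-Km) with hV
  -- real exponential identities
  have e1 : Real.exp r ^ 2 = Real.exp (2*r) := by
    rw [sq, ← Real.exp_add]; congr 1; ring
  have e2 : Real.exp (-r) ^ 2 = Real.exp (-(2*r)) := by
    rw [sq, ← Real.exp_add]; congr 1; ring
  have hcosh1 : Real.cosh (2*r) * 1 = (Real.exp r ^ 2 + Real.exp (-r) ^ 2) / 2 := by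
    rw [e1, e2, Real.cosh_eq]; ring
  have hcosh2 : Real.cosh (2*r) * lam^2
      = (lam^2 / Real.exp r ^ 2 + lam^2 / Real.exp (-r) ^ 2) / 2 := by
    rw [e1, e2, Real.cosh_eq, Real.exp_neg (2*r)]
    have := Real.exp_ne_zero (2*r)
    field_simp
    ring
  have hsinh1 : Real.sinh (2*r) * 1 = (Real.exp r ^ 2 - Real.exp (-r) ^ 2) / 2 := by
    rw [e1, e2, Real.sinh_eq]; ring
  have hsinh2 : Real.sinh (2*r) * (-lam^2)
      = (lam^2 / Real.exp r ^ 2 - lam^2 / Real.exp (-r) ^ 2) / 2 := by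
    rw [e1, e2, Real.sinh_eq, Real.exp_neg (2*r)]
    have := Real.exp_ne_zero (2*r)
    field_simp
    ring
  -- diagonal identities
  have hDp : (Dplus n lam r).map Complex.ofReal
      = (1/2 : ℂ) • (Matrix.diagonal (fun i : Fin (2*n) =>
            if (i:ℕ) % 2 = 0 then ((Real.exp r ^ 2 : ℝ) : ℂ) else ((lam^2 / Real.exp r ^ 2 : ℝ) : ℂ))
          + Matrix.diagonal (fun i : Fin (2*n) =>
            if (i:ℕ) % 2 = 0 then ((Real.exp (-r) ^ 2 : ℝ) : ℂ) else ((lam^2 / Real.exp (-r) ^ 2 : ℝ) : ℂ))) := by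
    ext i j
    simp only [Dplus, Matrix.map_apply, Matrix.smul_apply, Matrix.add_apply, smul_eq_mul]
    by_cases hij : i = j
    · subst hij
      simp only [Matrix.diagonal_apply_eq]
      by_cases h : (i:ℕ) % 2 = 0
      · simp only [h, if_true]
        rw [hcosh1]
        push_cast; ring
      · simp only [h, if_false]
        rw [hcosh2]
        push_cast; ring
    · simp [Matrix.diagonal_apply_ne _ hij]
  have hDm : (Dminus n lam r).map Complex.ofReal
      = (1/2 : ℂ) • (Matrix.diagonal (fun i : Fin (2*n) =>
            if (i:ℕ) % 2 = 0 then ((Real.exp r ^ 2 : ℝ) : ℂ) else ((lam^2 / Real.exp r ^ 2 : ℝ) : ℂ))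
          - Matrix.diagonal (fun i : Fin (2*n) =>
            if (i:ℕ) % 2 = 0 then ((Real.exp (-r) ^ 2 : ℝ) : ℂ) else ((lam^2 / Real.exp (-r) ^ 2 : ℝ) : ℂ))) := by
    ext i j
    simp only [Dminus, Matrix.map_apply, Matrix.smul_apply, Matrix.sub_apply, smul_eq_mul]
    by_cases hij : i = j
    · subst hij
      simp only [Matrix.diagonal_apply_eq]
      by_cases h : (i:ℕ) % 2 = 0
      · simp only [h, if_true]
        rw [hsinh1]
        push_cast; ring
      · simp only [h, if_false]
        rw [hsinh2]
        push_cast; ring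
    · simp [Matrix.diagonal_apply_ne _ hij]
  have hA : (Dplus n lam r).map Complex.ofReal
        + (Complex.I * (lam:ℂ)) • (stdSymp n).map Complex.ofReal
      = (1/2 : ℂ) • (Kpᴴ * Kp + Kmᴴ * Km) := by
    rw [KhK n lam _ hup, KhK n lam _ hum, symp_map, hDp]
    module
  have hB : (Dminus n lam r).map Complex.ofReal
      = (1/2 : ℂ) • (Kpᴴ * Kp - Kmᴴ * Km) := by
    rw [KhK n lam _ hup, KhK n lam _ hum, hDm]
    module
  have hVV : Vᴴ * V = Matrix.fromBlocks (Kpᴴ * Kp + Kmᴴ * Km) (Kpᴴ * Kp - Kmᴴ * Km)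
      (Kpᴴ * Kp - Kmᴴ * Km) (Kpᴴ * Kp + Kmᴴ * Km) := by
    rw [hV, fromBlocks_conjTranspose, fromBlocks_multiply]
    refine fromBlocks_inj.mpr ⟨rfl, ?_, ?_, ?_⟩ <;>
      simp [Matrix.mul_neg, Matrix.neg_mul, Matrix.conjTranspose_neg, sub_eq_add_neg]
  -- the full matrix equals (1/2) • (Vᴴ * V)
  have key : (Matrix.fromBlocks (Dplus n lam r) (Dminus n lam r)
          (Dminus n lam r) (Dplus n lam r)).map Complex.ofReal +
        (Complex.I * (lam : ℂ)) •
          (Matrix.fromBlocks (stdSymp n) 0 0 (stdSymp n)).map Complex.ofReal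
      = (1/2 : ℂ) • (Vᴴ * V) := by
    rw [hVV, Matrix.fromBlocks_map, Matrix.fromBlocks_map, Matrix.fromBlocks_smul,
      Matrix.fromBlocks_smul, Matrix.fromBlocks_add]
    refine fromBlocks_inj.mpr ⟨?_, ?_, ?_, ?_⟩
    · exact hA
    · rw [show ((0 : Matrix (Fin (2*n)) (Fin (2*n)) ℝ)).map Complex.ofReal = 0 from
        Matrix.map_zero _ Complex.ofReal_zero]
      rw [smul_zero, add_zero]
      exact hB
    · rw [show ((0 : Matrix (Fin (2*n)) (Fin (2*n)) ℝ)).map Complex.ofReal = 0 from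
        Matrix.map_zero _ Complex.ofReal_zero]
      rw [smul_zero, add_zero]
      exact hB
    · exact hA
  rw [key]
  have hW : (1/2 : ℂ) • (Vᴴ * V)
      = ((((Real.sqrt 2)⁻¹ : ℝ) : ℂ) • V)ᴴ * ((((Real.sqrt 2)⁻¹ : ℝ) : ℂ) • V) := by
    rw [Matrix.conjTranspose_smul, Matrix.smul_mul, Matrix.mul_smul, smul_smul]
    congr 1
    rw [Complex.star_def, Complex.conj_ofReal, ← Complex.ofReal_mul,
      show ((Real.sqrt 2)⁻¹ * (Real.sqrt 2)⁻¹ : ℝ) = 1/2 from by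
        rw [← mul_inv, Real.mul_self_sqrt (by norm_num)]; norm_num]
    norm_num
  rw [hW]
  exact Matrix.posSemidef_conjTranspose_mul_self _
end

section
/- Let λ > 0 and r ∈ ℝ with r ≠ 0, and for a system of n degrees of freedom define the diagonal 2n×2n real matrices D₊(r) = cosh(2r)·diag(1, λ², 1, λ², …) and D₋(r) = sinh(2r)·diag(1, −λ², 1, −λ², …), and let Σ be the standard 2n×2n symplectic form matrix. Then the complex matrix D₊(r) + iλΣ is invertible, and D₊(r) − D₋(r)·(D₊(r) + iλΣ)^{−1}·D₋(r) = −iλΣ. -/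
open Matrix

namespace EPRaux

variable {n : ℕ}

def partner (i : Fin (2*n)) : Fin (2*n) :=
  ⟨if (i : ℕ) % 2 = 0 then (i : ℕ) + 1 else (i : ℕ) - 1, by
    have := i.isLt; split_ifs with h <;> omega⟩

lemma partner_coe (i : Fin (2*n)) :
    (partner i : ℕ) = if (i : ℕ) % 2 = 0 then (i : ℕ) + 1 else (i : ℕ) - 1 := rfl

lemma stdSymp_eq_zero {i k : Fin (2*n)} (h : k ≠ partner i) : stdSymp n i k = 0 := by
  have hp := partner_coe i
  rcases Nat.mod_two_eq_zero_or_one (i : ℕ) with h2 | h2 <;>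
    rw [h2] at hp <;> norm_num at hp <;>
    · unfold stdSymp
      simp only [Matrix.of_apply]
      split_ifs with h1 hb
      · exact absurd (Fin.ext (by omega)) h
      · exact absurd (Fin.ext (by omega)) h
      · rfl

lemma sympSq : stdSymp n * stdSymp n = -1 := by
  ext i j
  rw [Matrix.mul_apply]
  rw [Finset.sum_eq_single_of_mem (partner i) (Finset.mem_univ _)
    (fun k _ hk => by rw [stdSymp_eq_zero hk, zero_mul])]
  have hi := i.isLt
  have hj := j.isLt
  have hp := partner_coe i
  by_cases hij : i = j
  · have hnat : (i : ℕ) = (j : ℕ) := by rw [hij]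
    simp only [stdSymp, Matrix.of_apply, Matrix.neg_apply, Matrix.one_apply, if_pos hij]
    rcases Nat.mod_two_eq_zero_or_one (i : ℕ) with h2 | h2 <;>
      rw [h2] at hp <;> norm_num at hp <;>
      split_ifs <;> first | ring1 | (exfalso; omega)
  · have hnat : (i : ℕ) ≠ (j : ℕ) := fun hc => hij (Fin.ext hc)
    simp only [stdSymp, Matrix.of_apply, Matrix.neg_apply, Matrix.one_apply, if_neg hij]
    rcases Nat.mod_two_eq_zero_or_one (i : ℕ) with h2 | h2 <;>
      rw [h2] at hp <;> norm_num at hp <;>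
      split_ifs <;> first | ring1 | (exfalso; omega)


noncomputable def dm (n : ℕ) (lam : ℝ) : Matrix (Fin (2*n)) (Fin (2*n)) ℝ :=
  Matrix.diagonal (fun i : Fin (2*n) => if (i : ℕ) % 2 = 0 then 1 else lam ^ 2)

noncomputable def em (n : ℕ) (lam : ℝ) : Matrix (Fin (2*n)) (Fin (2*n)) ℝ :=
  Matrix.diagonal (fun i : Fin (2*n) => if (i : ℕ) % 2 = 0 then 1 else (lam ^ 2)⁻¹)

noncomputable def d'm (n : ℕ) (lam : ℝ) : Matrix (Fin (2*n)) (Fin (2*n)) ℝ :=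
  Matrix.diagonal (fun i : Fin (2*n) => if (i : ℕ) % 2 = 0 then 1 else -lam ^ 2)

lemma diag_congr {f g : Fin (2*n) → ℝ} (h : ∀ i, f i = g i) :
    Matrix.diagonal f = Matrix.diagonal g := by
  rw [funext h]

lemma de_one (lam : ℝ) (h : lam ≠ 0) : dm n lam * em n lam = 1 := by
  rw [dm, em, Matrix.diagonal_mul_diagonal, ← Matrix.diagonal_one]
  exact diag_congr fun i => by split_ifs <;> field_simp

lemma dS (lam : ℝ) (h : lam ≠ 0) :
    dm n lam * stdSymp n = lam ^ 2 • (stdSymp n * em n lam) := by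
  ext i j
  simp only [dm, em, stdSymp, Matrix.diagonal_mul, Matrix.mul_diagonal,
    Matrix.smul_apply, smul_eq_mul, Matrix.of_apply]
  split_ifs <;> first | ring1 | (exfalso; omega) | field_simp

lemma Sd (lam : ℝ) (h : lam ≠ 0) :
    stdSymp n * dm n lam = lam ^ 2 • (em n lam * stdSymp n) := by
  ext i j
  simp only [dm, em, stdSymp, Matrix.diagonal_mul, Matrix.mul_diagonal,
    Matrix.smul_apply, smul_eq_mul, Matrix.of_apply]
  split_ifs <;> first | ring1 | (exfalso; omega) | field_simp

lemma d'Sd' (lam : ℝ) :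
    d'm n lam * stdSymp n * d'm n lam = (-lam ^ 2) • stdSymp n := by
  ext i j
  simp only [d'm, stdSymp, Matrix.diagonal_mul, Matrix.mul_diagonal,
    Matrix.smul_apply, smul_eq_mul, Matrix.of_apply]
  split_ifs <;> first | ring1 | (exfalso; omega)

lemma d'ed' (lam : ℝ) (h : lam ≠ 0) :
    d'm n lam * em n lam * d'm n lam = dm n lam := by
  rw [d'm, em, dm, Matrix.diagonal_mul_diagonal, Matrix.diagonal_mul_diagonal]
  exact diag_congr fun i => by split_ifs <;> field_simp <;> ring

lemma mapMul (A B : Matrix (Fin (2*n)) (Fin (2*n)) ℝ) :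
    (A * B).map Complex.ofReal = A.map Complex.ofReal * B.map Complex.ofReal := by
  ext i j; simp [Matrix.mul_apply, Matrix.map_apply]

lemma mapSmul (a : ℝ) (A : Matrix (Fin (2*n)) (Fin (2*n)) ℝ) :
    (a • A).map Complex.ofReal = (a : ℂ) • A.map Complex.ofReal := by
  ext i j; simp

lemma mapOne : (1 : Matrix (Fin (2*n)) (Fin (2*n)) ℝ).map Complex.ofReal = 1 := by
  ext i j; simp [Matrix.one_apply, apply_ite Complex.ofReal]

lemma mapNegOne : (-1 : Matrix (Fin (2*n)) (Fin (2*n)) ℝ).map Complex.ofReal = -1 := by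
  ext i j; simp [Matrix.one_apply, apply_ite Complex.ofReal]

end EPRaux

open EPRaux

/-- For λ > 0 and r ≠ 0, the complex matrix D₊(r) + iλΣ is invertible and
D₊(r) − D₋(r)(D₊(r) + iλΣ)⁻¹D₋(r) = −iλΣ. -/
theorem EPR_matrix_identity {n : ℕ} (lam r : ℝ) (hlam : 0 < lam) (hr : r ≠ 0) :
    IsUnit ((Dplus n lam r).map Complex.ofReal +
        (Complex.I * (lam : ℂ)) • (stdSymp n).map Complex.ofReal) ∧
    (Dplus n lam r).map Complex.ofReal -
        (Dminus n lam r).map Complex.ofReal *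
          ((Dplus n lam r).map Complex.ofReal +
            (Complex.I * (lam : ℂ)) • (stdSymp n).map Complex.ofReal)⁻¹ *
          (Dminus n lam r).map Complex.ofReal =
      -((Complex.I * (lam : ℂ)) • (stdSymp n).map Complex.ofReal) := by
  have hl : lam ≠ 0 := ne_of_gt hlam
  have hlC : (lam : ℂ) ≠ 0 := by exact_mod_cast hl
  set c : ℝ := Real.cosh (2 * r) with hc
  set s : ℝ := Real.sinh (2 * r) with hs
  have hsne : s ≠ 0 := by
    rw [hs]; intro h; exact hr (by have := Real.sinh_eq_zero.mp h; linarith)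
  have hsC : (s : ℂ) ≠ 0 := by exact_mod_cast hsne
  have hcs : (c : ℂ) ^ 2 - (s : ℂ) ^ 2 = 1 := by
    have := Real.cosh_sq_sub_sinh_sq (2 * r)
    rw [hc, hs]; exact_mod_cast this
  set S : Matrix (Fin (2*n)) (Fin (2*n)) ℂ := (stdSymp n).map Complex.ofReal with hS
  set D : Matrix (Fin (2*n)) (Fin (2*n)) ℂ := (dm n lam).map Complex.ofReal with hD
  set E : Matrix (Fin (2*n)) (Fin (2*n)) ℂ := (em n lam).map Complex.ofReal with hE
  set D' : Matrix (Fin (2*n)) (Fin (2*n)) ℂ := (d'm n lam).map Complex.ofReal with hD'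
  -- lifted identities
  have hSS : S * S = -1 := by rw [hS, ← mapMul, EPRaux.sympSq, mapNegOne]
  have hDE : D * E = 1 := by rw [hD, hE, ← mapMul, de_one lam hl, mapOne]
  have hDS : D * S = ((lam : ℂ) ^ 2) • (S * E) := by
    rw [hD, hS, hE, ← mapMul, dS lam hl, mapSmul, mapMul]; push_cast; ring_nf
  have hSD : S * D = ((lam : ℂ) ^ 2) • (E * S) := by
    rw [hD, hS, hE, ← mapMul, Sd lam hl, mapSmul, mapMul]; push_cast; ring_nf
  have hD'SD' : D' * S * D' = (-(lam : ℂ) ^ 2) • S := by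
    rw [hD', hS, ← mapMul, ← mapMul, d'Sd' lam, mapSmul]; push_cast; ring_nf
  have hD'ED' : D' * E * D' = D := by
    rw [hD', hE, hD, ← mapMul, ← mapMul, d'ed' lam hl]
  -- main matrices
  have hDplus : (Dplus n lam r).map Complex.ofReal = (c : ℂ) • D := by
    rw [hD, ← mapSmul]; rfl
  have hDminus : (Dminus n lam r).map Complex.ofReal = (s : ℂ) • D' := by
    rw [hD', ← mapSmul]; rfl
  set M : Matrix (Fin (2*n)) (Fin (2*n)) ℂ :=
    (c : ℂ) • D + (Complex.I * (lam : ℂ)) • S with hM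
  set P : Matrix (Fin (2*n)) (Fin (2*n)) ℂ :=
    ((c : ℂ) * (lam : ℂ) ^ 2) • E + (-(Complex.I * (lam : ℂ))) • S with hP
  have hMP : M * P = ((lam : ℂ) ^ 2 * (s : ℂ) ^ 2) • 1 := by
    rw [hM, hP]
    simp only [mul_add, add_mul, Matrix.smul_mul, Matrix.mul_smul, smul_smul,
      Matrix.mul_assoc, hDE, hDS, hSS]
    match_scalars
    · linear_combination ((lam : ℂ))^2 * hcs + ((lam : ℂ))^2 * Complex.I_sq
    · ring1
  set N : Matrix (Fin (2*n)) (Fin (2*n)) ℂ :=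
    (((lam : ℂ) ^ 2 * (s : ℂ) ^ 2)⁻¹) • P with hN
  have hscne : ((lam : ℂ) ^ 2 * (s : ℂ) ^ 2) ≠ 0 := by
    apply mul_ne_zero <;> exact pow_ne_zero _ (by assumption)
  have hMN : M * N = 1 := by
    rw [hN, Matrix.mul_smul, hMP, smul_smul, inv_mul_cancel₀ hscne, one_smul]
  have hNM : N * M = 1 := mul_eq_one_comm.mp hMN
  have hMinv : ((c : ℂ) • D + (Complex.I * (lam : ℂ)) • S)⁻¹ = N :=
    Matrix.inv_eq_right_inv hMN
  have hD'ED'r : D' * (E * D') = D := by rw [← Matrix.mul_assoc, hD'ED']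
  have hD'SD'r : D' * (S * D') = (-(lam : ℂ) ^ 2) • S := by
    rw [← Matrix.mul_assoc, hD'SD']
  have hD'ND' : ((s : ℂ) • D') * N * ((s : ℂ) • D') = M := by
    rw [hN, hP, hM]
    simp only [mul_add, add_mul, Matrix.smul_mul, Matrix.mul_smul, smul_smul,
      Matrix.mul_assoc, hD'ED'r, hD'SD'r]
    match_scalars
    · field_simp
    · field_simp
  constructor
  · rw [hDplus]
    exact ⟨⟨M, N, hMN, hNM⟩, rfl⟩
  · rw [hDplus, hDminus, hMinv, hD'ND', hM]
    abel
end

section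
/- Let f₁, f₂ : ℝⁿ → [0,∞) and ν : ℝⁿ → [0,∞) be measurable probability densities, and suppose there exists a measurable stochastic kernel density η : (ℝⁿ × ℝⁿ) × (ℝⁿ × ℝⁿ) → [0,∞) (with ∫η(w, x) dw = 1 for all x ∈ ℝⁿ×ℝⁿ) such that for both k = 1 and k = 2, the processed density of the input f_k⊗ν equals the clone f_k⊗f_k, i.e., ∫η((z₁,z₂), (z,z'))·f_k(z)ν(z') dz dz' = f_k(z₁)f_k(z₂) for almost every (z₁,z₂). Then ∫√(f₁(z)f₂(z)) dz ∈ {0, 1}; equivalently, either f₁·f₂ = 0 almost everywhere (the densities are disjoint) or f₁ = f₂ almost everywhere. -/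
open MeasureTheory
open scoped ENNReal

lemma aux_sqrt_mul_self (a : ℝ≥0∞) : (a * a) ^ (1/2 : ℝ) = a := by
  have h2 : a ^ (2:ℝ) = a * a := by
    rw [show (2:ℝ) = ((2:ℕ):ℝ) by norm_num, ENNReal.rpow_natCast, pow_two]
  rw [← h2, ← ENNReal.rpow_mul]; norm_num

lemma aux_cs {α : Type*} [MeasurableSpace α] (μ : Measure α)
    {a b : α → ℝ≥0∞} (ha : Measurable a) (hb : Measurable b) :
    ∫⁻ x, (a x * b x) ^ (1/2:ℝ) ∂μ ≤ (∫⁻ x, a x ∂μ) ^ (1/2:ℝ) * (∫⁻ x, b x ∂μ) ^ (1/2:ℝ) := by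
  have hpq : Real.HolderConjugate 2 2 := Real.HolderConjugate.two_two
  have H := ENNReal.lintegral_mul_le_Lp_mul_Lq μ hpq
    (f := fun x => a x ^ (1/2:ℝ)) (g := fun x => b x ^ (1/2:ℝ))
    (ha.pow_const _).aemeasurable (hb.pow_const _).aemeasurable
  simp only [Pi.mul_apply] at H
  calc ∫⁻ x, (a x * b x) ^ (1/2:ℝ) ∂μ
      = ∫⁻ x, a x ^ (1/2:ℝ) * b x ^ (1/2:ℝ) ∂μ := by
        simp_rw [ENNReal.mul_rpow_of_nonneg _ _ (by norm_num : (0:ℝ) ≤ 1/2)]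
    _ ≤ (∫⁻ x, (a x ^ (1/2:ℝ)) ^ (2:ℝ) ∂μ) ^ (1/(2:ℝ)) *
          (∫⁻ x, (b x ^ (1/2:ℝ)) ^ (2:ℝ) ∂μ) ^ (1/(2:ℝ)) := H
    _ = (∫⁻ x, a x ∂μ) ^ (1/2:ℝ) * (∫⁻ x, b x ∂μ) ^ (1/2:ℝ) := by
        simp_rw [← ENNReal.rpow_mul]; norm_num

lemma aux_clone {n : ℕ} (f ν : (Fin n → ℝ) → ℝ)
    (hfm : Measurable f) (hνm : Measurable ν)
    (hf0 : ∀ z, 0 ≤ f z) (hν0 : ∀ z, 0 ≤ ν z)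
    (hf1 : ∫ z, f z = 1) (hν1 : ∫ z, ν z = 1)
    (η : ((Fin n → ℝ) × (Fin n → ℝ)) → ((Fin n → ℝ) × (Fin n → ℝ)) → ℝ)
    (hηm : Measurable (Function.uncurry η))
    (hη0 : ∀ w x, 0 ≤ η w x) (hη1 : ∀ x, ∫ w, η w x = 1)
    (hclone : (fun w : (Fin n → ℝ) × (Fin n → ℝ) =>
        ∫ x : (Fin n → ℝ) × (Fin n → ℝ), η w x * (f x.1 * ν x.2)) =ᵐ[volume]
      (fun w => f w.1 * f w.2)) :
    (fun w : (Fin n → ℝ) × (Fin n → ℝ) =>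
        ∫⁻ x : (Fin n → ℝ) × (Fin n → ℝ),
          ENNReal.ofReal (η w x) * (ENNReal.ofReal (f x.1) * ENNReal.ofReal (ν x.2)))
      =ᵐ[volume] (fun w => ENNReal.ofReal (f w.1) * ENNReal.ofReal (f w.2)) := by
  have hfm' : Measurable fun z => ENNReal.ofReal (f z) := ENNReal.measurable_ofReal.comp hfm
  have hνm' : Measurable fun z => ENNReal.ofReal (ν z) := ENNReal.measurable_ofReal.comp hνm
  have hem : Measurable fun p : ((Fin n → ℝ) × (Fin n → ℝ)) × ((Fin n → ℝ) × (Fin n → ℝ)) =>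
      ENNReal.ofReal (η p.1 p.2) := ENNReal.measurable_ofReal.comp hηm
  have hcm : Measurable fun x : (Fin n → ℝ) × (Fin n → ℝ) =>
      ENNReal.ofReal (f x.1) * ENNReal.ofReal (ν x.2) :=
    (hfm'.comp measurable_fst).mul (hνm'.comp measurable_snd)
  have hKm : Measurable fun p : ((Fin n → ℝ) × (Fin n → ℝ)) × ((Fin n → ℝ) × (Fin n → ℝ)) =>
      ENNReal.ofReal (η p.1 p.2) * (ENNReal.ofReal (f p.2.1) * ENNReal.ofReal (ν p.2.2)) :=
    hem.mul (hcm.comp measurable_snd)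
  have hηlint : ∀ x, ∫⁻ w, ENNReal.ofReal (η w x) = 1 := by
    intro x
    have h := ofReal_integral_eq_lintegral_ofReal (integrable_of_integral_eq_one (hη1 x))
      (Filter.Eventually.of_forall fun w => hη0 w x)
    rw [hη1 x, ENNReal.ofReal_one] at h
    exact h.symm
  have hflint : ∫⁻ z, ENNReal.ofReal (f z) = 1 := by
    have h := ofReal_integral_eq_lintegral_ofReal (integrable_of_integral_eq_one hf1)
      (Filter.Eventually.of_forall hf0)
    rw [hf1, ENNReal.ofReal_one] at h; exact h.symm
  have hνlint : ∫⁻ z, ENNReal.ofReal (ν z) = 1 := by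
    have h := ofReal_integral_eq_lintegral_ofReal (integrable_of_integral_eq_one hν1)
      (Filter.Eventually.of_forall hν0)
    rw [hν1, ENNReal.ofReal_one] at h; exact h.symm
  have hLm : Measurable fun w : (Fin n → ℝ) × (Fin n → ℝ) =>
      ∫⁻ x, ENNReal.ofReal (η w x) * (ENNReal.ofReal (f x.1) * ENNReal.ofReal (ν x.2)) :=
    Measurable.lintegral_prod_right (f := fun w x =>
      ENNReal.ofReal (η w x) * (ENNReal.ofReal (f x.1) * ENNReal.ofReal (ν x.2))) hKm
  have hclint : ∫⁻ x : (Fin n → ℝ) × (Fin n → ℝ),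
      ENNReal.ofReal (f x.1) * ENNReal.ofReal (ν x.2) = 1 := by
    rw [MeasureTheory.Measure.volume_eq_prod, lintegral_prod_mul hfm'.aemeasurable
      hνm'.aemeasurable, hflint, hνlint, mul_one]
  have hLint : ∫⁻ w : (Fin n → ℝ) × (Fin n → ℝ),
      ∫⁻ x, ENNReal.ofReal (η w x) * (ENNReal.ofReal (f x.1) * ENNReal.ofReal (ν x.2)) = 1 := by
    rw [lintegral_lintegral_swap hKm.aemeasurable]
    calc ∫⁻ x : (Fin n → ℝ) × (Fin n → ℝ), ∫⁻ w,
          ENNReal.ofReal (η w x) * (ENNReal.ofReal (f x.1) * ENNReal.ofReal (ν x.2))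
        = ∫⁻ x : (Fin n → ℝ) × (Fin n → ℝ), (∫⁻ w, ENNReal.ofReal (η w x)) *
            (ENNReal.ofReal (f x.1) * ENNReal.ofReal (ν x.2)) := by
          refine lintegral_congr fun x => ?_
          exact lintegral_mul_const _ (ENNReal.measurable_ofReal.comp
            (hηm.comp measurable_prodMk_right))
      _ = 1 := by simp_rw [hηlint, one_mul]; exact hclint
  have hfin : ∀ᵐ w : (Fin n → ℝ) × (Fin n → ℝ),
      (∫⁻ x, ENNReal.ofReal (η w x) * (ENNReal.ofReal (f x.1) * ENNReal.ofReal (ν x.2))) < ⊤ :=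
    ae_lt_top hLm (by rw [hLint]; exact ENNReal.one_ne_top)
  have htoReal : ∀ w : (Fin n → ℝ) × (Fin n → ℝ),
      (∫ x : (Fin n → ℝ) × (Fin n → ℝ), η w x * (f x.1 * ν x.2)) =
        (∫⁻ x, ENNReal.ofReal (η w x) *
          (ENNReal.ofReal (f x.1) * ENNReal.ofReal (ν x.2))).toReal := by
    intro w
    have hmeas : Measurable fun x : (Fin n → ℝ) × (Fin n → ℝ) => η w x * (f x.1 * ν x.2) :=
      (hηm.comp measurable_prodMk_left).mul
        ((hfm.comp measurable_fst).mul (hνm.comp measurable_snd))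
    rw [integral_eq_lintegral_of_nonneg_ae
      (Filter.Eventually.of_forall fun x => mul_nonneg (hη0 w x)
        (mul_nonneg (hf0 x.1) (hν0 x.2))) hmeas.aestronglyMeasurable]
    congr 1
    refine lintegral_congr fun x => ?_
    rw [ENNReal.ofReal_mul (hη0 w x), ENNReal.ofReal_mul (hf0 x.1)]
  filter_upwards [hclone, hfin] with w h1 h2
  have h3 : (∫⁻ x, ENNReal.ofReal (η w x) *
      (ENNReal.ofReal (f x.1) * ENNReal.ofReal (ν x.2))).toReal = f w.1 * f w.2 := by
    rw [← htoReal w]; exact h1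
  have h4 : (∫⁻ x, ENNReal.ofReal (η w x) * (ENNReal.ofReal (f x.1) * ENNReal.ofReal (ν x.2)))
      = ENNReal.ofReal (f w.1 * f w.2) := by
    rw [← h3, ENNReal.ofReal_toReal h2.ne]
  rw [h4, ENNReal.ofReal_mul (hf0 w.1)]

/-- Classical no-cloning theorem: if a stochastic kernel η clones each of two
probability densities f₁, f₂ (taking f_k⊗ν to f_k⊗f_k), then their fidelity is 0 or 1;
equivalently, the densities are disjoint a.e. or equal a.e. -/
theorem classical_no_cloning {n : ℕ}
    (f₁ f₂ ν : (Fin n → ℝ) → ℝ)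
    (hf₁m : Measurable f₁) (hf₂m : Measurable f₂) (hνm : Measurable ν)
    (hf₁0 : ∀ z, 0 ≤ f₁ z) (hf₂0 : ∀ z, 0 ≤ f₂ z) (hν0 : ∀ z, 0 ≤ ν z)
    (hf₁1 : ∫ z, f₁ z = 1) (hf₂1 : ∫ z, f₂ z = 1) (hν1 : ∫ z, ν z = 1)
    (η : ((Fin n → ℝ) × (Fin n → ℝ)) → ((Fin n → ℝ) × (Fin n → ℝ)) → ℝ)
    (hηm : Measurable (Function.uncurry η))
    (hη0 : ∀ w x, 0 ≤ η w x) (hη1 : ∀ x, ∫ w, η w x = 1)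
    (hclone₁ : (fun w : (Fin n → ℝ) × (Fin n → ℝ) =>
        ∫ x : (Fin n → ℝ) × (Fin n → ℝ), η w x * (f₁ x.1 * ν x.2)) =ᵐ[volume]
      (fun w => f₁ w.1 * f₁ w.2))
    (hclone₂ : (fun w : (Fin n → ℝ) × (Fin n → ℝ) =>
        ∫ x : (Fin n → ℝ) × (Fin n → ℝ), η w x * (f₂ x.1 * ν x.2)) =ᵐ[volume]
      (fun w => f₂ w.1 * f₂ w.2)) :
    ((∫ z, Real.sqrt (f₁ z * f₂ z)) = 0 ∨ (∫ z, Real.sqrt (f₁ z * f₂ z)) = 1) ∧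
    ((fun z => f₁ z * f₂ z) =ᵐ[volume] (fun _ => (0 : ℝ)) ∨ f₁ =ᵐ[volume] f₂) := by
  have half_nn : (0:ℝ) ≤ 1/2 := by norm_num
  have hg₁m : Measurable fun z => ENNReal.ofReal (f₁ z) := ENNReal.measurable_ofReal.comp hf₁m
  have hg₂m : Measurable fun z => ENNReal.ofReal (f₂ z) := ENNReal.measurable_ofReal.comp hf₂m
  have hgνm : Measurable fun z => ENNReal.ofReal (ν z) := ENNReal.measurable_ofReal.comp hνm
  have hsm : Measurable fun z => (ENNReal.ofReal (f₁ z) * ENNReal.ofReal (f₂ z)) ^ (1/2:ℝ) :=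
    (hg₁m.mul hg₂m).pow_const _
  have hflint₁ : ∫⁻ z, ENNReal.ofReal (f₁ z) = 1 := by
    have h := ofReal_integral_eq_lintegral_ofReal (integrable_of_integral_eq_one hf₁1)
      (Filter.Eventually.of_forall hf₁0)
    rw [hf₁1, ENNReal.ofReal_one] at h; exact h.symm
  have hflint₂ : ∫⁻ z, ENNReal.ofReal (f₂ z) = 1 := by
    have h := ofReal_integral_eq_lintegral_ofReal (integrable_of_integral_eq_one hf₂1)
      (Filter.Eventually.of_forall hf₂0)
    rw [hf₂1, ENNReal.ofReal_one] at h; exact h.symm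
  have hνlint : ∫⁻ z, ENNReal.ofReal (ν z) = 1 := by
    have h := ofReal_integral_eq_lintegral_ofReal (integrable_of_integral_eq_one hν1)
      (Filter.Eventually.of_forall hν0)
    rw [hν1, ENNReal.ofReal_one] at h; exact h.symm
  have hηlint : ∀ x, ∫⁻ w, ENNReal.ofReal (η w x) = 1 := by
    intro x
    have h := ofReal_integral_eq_lintegral_ofReal (integrable_of_integral_eq_one (hη1 x))
      (Filter.Eventually.of_forall fun w => hη0 w x)
    rw [hη1 x, ENNReal.ofReal_one] at h; exact h.symm
  set S : ℝ≥0∞ := ∫⁻ z, (ENNReal.ofReal (f₁ z) * ENNReal.ofReal (f₂ z)) ^ (1/2:ℝ) with hSdef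
  -- fidelity ≤ 1
  have hS1 : S ≤ 1 := by
    have h := aux_cs volume hg₁m hg₂m
    rw [hflint₁, hflint₂, ENNReal.one_rpow, one_mul] at h
    exact h
  -- the pointwise algebraic identity
  have hpoint : ∀ (u a b c : ℝ≥0∞), ((u * (a * c)) * (u * (b * c))) ^ (1/2:ℝ)
      = u * ((a * b) ^ (1/2:ℝ) * c) := by
    intro u a b c
    rw [show (u * (a * c)) * (u * (b * c)) = (u*u) * ((a*b) * (c*c)) by ring,
      ENNReal.mul_rpow_of_nonneg _ _ half_nn, aux_sqrt_mul_self,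
      ENNReal.mul_rpow_of_nonneg _ _ half_nn, aux_sqrt_mul_self]
  -- S ≤ S * S (data processing + cloning)
  have key : S ≤ S * S := by
    have hsm2 : Measurable fun x : (Fin n → ℝ) × (Fin n → ℝ) =>
        (ENNReal.ofReal (f₁ x.1) * ENNReal.ofReal (f₂ x.1)) ^ (1/2:ℝ) * ENNReal.ofReal (ν x.2) :=
      (hsm.comp measurable_fst).mul (hgνm.comp measurable_snd)
    have hKm : Measurable fun p : ((Fin n → ℝ) × (Fin n → ℝ)) × ((Fin n → ℝ) × (Fin n → ℝ)) =>
        ENNReal.ofReal (η p.1 p.2) *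
          ((ENNReal.ofReal (f₁ p.2.1) * ENNReal.ofReal (f₂ p.2.1)) ^ (1/2:ℝ) *
            ENNReal.ofReal (ν p.2.2)) :=
      (ENNReal.measurable_ofReal.comp hηm).mul (hsm2.comp measurable_snd)
    have hA : (∫⁻ w : (Fin n → ℝ) × (Fin n → ℝ), ∫⁻ x, ENNReal.ofReal (η w x) *
        ((ENNReal.ofReal (f₁ x.1) * ENNReal.ofReal (f₂ x.1)) ^ (1/2:ℝ) *
          ENNReal.ofReal (ν x.2))) = S := by
      rw [lintegral_lintegral_swap hKm.aemeasurable]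
      calc (∫⁻ x : (Fin n → ℝ) × (Fin n → ℝ), ∫⁻ w, ENNReal.ofReal (η w x) *
            ((ENNReal.ofReal (f₁ x.1) * ENNReal.ofReal (f₂ x.1)) ^ (1/2:ℝ) *
              ENNReal.ofReal (ν x.2)))
          = ∫⁻ x : (Fin n → ℝ) × (Fin n → ℝ), (∫⁻ w, ENNReal.ofReal (η w x)) *
              ((ENNReal.ofReal (f₁ x.1) * ENNReal.ofReal (f₂ x.1)) ^ (1/2:ℝ) *
                ENNReal.ofReal (ν x.2)) := by
            refine lintegral_congr fun x => ?_
            exact lintegral_mul_const _ (ENNReal.measurable_ofReal.comp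
              (hηm.comp measurable_prodMk_right))
        _ = ∫⁻ x : (Fin n → ℝ) × (Fin n → ℝ),
              (ENNReal.ofReal (f₁ x.1) * ENNReal.ofReal (f₂ x.1)) ^ (1/2:ℝ) *
                ENNReal.ofReal (ν x.2) := by simp_rw [hηlint, one_mul]
        _ = S := by
            rw [MeasureTheory.Measure.volume_eq_prod,
              lintegral_prod_mul hsm.aemeasurable hgνm.aemeasurable, hνlint, mul_one]
    have hcl₁ := aux_clone f₁ ν hf₁m hνm hf₁0 hν0 hf₁1 hν1 η hηm hη0 hη1 hclone₁
    have hcl₂ := aux_clone f₂ ν hf₂m hνm hf₂0 hν0 hf₂1 hν1 η hηm hη0 hη1 hclone₂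
    have hB : (∫⁻ w : (Fin n → ℝ) × (Fin n → ℝ),
        (∫⁻ x, ENNReal.ofReal (η w x) *
          (ENNReal.ofReal (f₁ x.1) * ENNReal.ofReal (ν x.2))) ^ (1/2:ℝ) *
        (∫⁻ x, ENNReal.ofReal (η w x) *
          (ENNReal.ofReal (f₂ x.1) * ENNReal.ofReal (ν x.2))) ^ (1/2:ℝ)) = S * S := by
      have hae : (fun w : (Fin n → ℝ) × (Fin n → ℝ) =>
          (∫⁻ x, ENNReal.ofReal (η w x) *
            (ENNReal.ofReal (f₁ x.1) * ENNReal.ofReal (ν x.2))) ^ (1/2:ℝ) *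
          (∫⁻ x, ENNReal.ofReal (η w x) *
            (ENNReal.ofReal (f₂ x.1) * ENNReal.ofReal (ν x.2))) ^ (1/2:ℝ)) =ᵐ[volume]
          (fun w => (ENNReal.ofReal (f₁ w.1) * ENNReal.ofReal (f₂ w.1)) ^ (1/2:ℝ) *
            (ENNReal.ofReal (f₁ w.2) * ENNReal.ofReal (f₂ w.2)) ^ (1/2:ℝ)) := by
        filter_upwards [hcl₁, hcl₂] with w e₁ e₂
        rw [e₁, e₂, ← ENNReal.mul_rpow_of_nonneg _ _ half_nn,
          show ENNReal.ofReal (f₁ w.1) * ENNReal.ofReal (f₁ w.2) *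
              (ENNReal.ofReal (f₂ w.1) * ENNReal.ofReal (f₂ w.2))
            = (ENNReal.ofReal (f₁ w.1) * ENNReal.ofReal (f₂ w.1)) *
              (ENNReal.ofReal (f₁ w.2) * ENNReal.ofReal (f₂ w.2)) by ring,
          ENNReal.mul_rpow_of_nonneg _ _ half_nn]
      rw [lintegral_congr_ae hae, MeasureTheory.Measure.volume_eq_prod,
        lintegral_prod_mul hsm.aemeasurable hsm.aemeasurable]
    calc S = _ := hA.symm
      _ ≤ (∫⁻ w : (Fin n → ℝ) × (Fin n → ℝ),
            (∫⁻ x, ENNReal.ofReal (η w x) *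
              (ENNReal.ofReal (f₁ x.1) * ENNReal.ofReal (ν x.2))) ^ (1/2:ℝ) *
            (∫⁻ x, ENNReal.ofReal (η w x) *
              (ENNReal.ofReal (f₂ x.1) * ENNReal.ofReal (ν x.2))) ^ (1/2:ℝ)) := by
          refine lintegral_mono fun w => ?_
          have hew : Measurable fun x : (Fin n → ℝ) × (Fin n → ℝ) =>
              ENNReal.ofReal (η w x) :=
            ENNReal.measurable_ofReal.comp (hηm.comp measurable_prodMk_left)
          have ha : Measurable fun x : (Fin n → ℝ) × (Fin n → ℝ) =>
              ENNReal.ofReal (η w x) * (ENNReal.ofReal (f₁ x.1) * ENNReal.ofReal (ν x.2)) :=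
            hew.mul ((hg₁m.comp measurable_fst).mul (hgνm.comp measurable_snd))
          have hb : Measurable fun x : (Fin n → ℝ) × (Fin n → ℝ) =>
              ENNReal.ofReal (η w x) * (ENNReal.ofReal (f₂ x.1) * ENNReal.ofReal (ν x.2)) :=
            hew.mul ((hg₂m.comp measurable_fst).mul (hgνm.comp measurable_snd))
          have h := aux_cs volume ha hb
          calc (∫⁻ x, ENNReal.ofReal (η w x) *
              ((ENNReal.ofReal (f₁ x.1) * ENNReal.ofReal (f₂ x.1)) ^ (1/2:ℝ) *
                ENNReal.ofReal (ν x.2)))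
              = ∫⁻ x, ((ENNReal.ofReal (η w x) *
                  (ENNReal.ofReal (f₁ x.1) * ENNReal.ofReal (ν x.2))) *
                (ENNReal.ofReal (η w x) *
                  (ENNReal.ofReal (f₂ x.1) * ENNReal.ofReal (ν x.2)))) ^ (1/2:ℝ) := by
                refine lintegral_congr fun x => ?_
                rw [hpoint]
            _ ≤ _ := h
      _ = S * S := hB
  -- S = 0 or S = 1
  have hSS : S * S = S := le_antisymm
    (by calc S * S ≤ S * 1 := mul_le_mul_right hS1 S
          _ = S := mul_one S) key
  have hScases : S = 0 ∨ S = 1 := by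
    rcases eq_or_ne S 0 with h0 | h0
    · exact Or.inl h0
    · right
      have hne : S ≠ ⊤ := ne_top_of_le_ne_top ENNReal.one_ne_top hS1
      have ht : S.toReal * S.toReal = S.toReal := by rw [← ENNReal.toReal_mul, hSS]
      have ht0 : S.toReal ≠ 0 := by simp [ENNReal.toReal_eq_zero_iff, hne, h0]
      have h2 : S.toReal = 1 := mul_right_cancel₀ ht0 (ht.trans (one_mul S.toReal).symm)
      rw [← ENNReal.ofReal_toReal hne, h2, ENNReal.ofReal_one]
  -- the real fidelity equals S.toReal
  have hfid : (∫ z, Real.sqrt (f₁ z * f₂ z)) = S.toReal := by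
    rw [integral_eq_lintegral_of_nonneg_ae
      (Filter.Eventually.of_forall fun z => Real.sqrt_nonneg _)
      (show Measurable fun z => Real.sqrt (f₁ z * f₂ z) from (hf₁m.mul hf₂m).sqrt).aestronglyMeasurable]
    congr 1
    refine lintegral_congr fun z => ?_
    rw [Real.sqrt_eq_rpow, ← ENNReal.ofReal_rpow_of_nonneg
      (mul_nonneg (hf₁0 z) (hf₂0 z)) half_nn, ENNReal.ofReal_mul (hf₁0 z)]
  rcases hScases with h0 | h1
  · -- disjoint case
    have hfid0 : (∫ z, Real.sqrt (f₁ z * f₂ z)) = 0 := by rw [hfid, h0]; simp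
    have hae0 : (fun z => f₁ z * f₂ z) =ᵐ[volume] (fun _ => (0:ℝ)) := by
      have := (lintegral_eq_zero_iff hsm).mp h0
      filter_upwards [this] with z hz
      simp only [Pi.zero_apply] at hz
      have h1 : ENNReal.ofReal (f₁ z) * ENNReal.ofReal (f₂ z) = 0 :=
        (ENNReal.rpow_eq_zero_iff_of_pos (by norm_num)).mp hz
      rw [← ENNReal.ofReal_mul (hf₁0 z), ENNReal.ofReal_eq_zero] at h1
      exact le_antisymm h1 (mul_nonneg (hf₁0 z) (hf₂0 z))
    exact ⟨Or.inl hfid0, Or.inl hae0⟩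
  · -- equal case
    have hfid1 : (∫ z, Real.sqrt (f₁ z * f₂ z)) = 1 := by rw [hfid, h1]; simp
    have hint₁ : Integrable f₁ := integrable_of_integral_eq_one hf₁1
    have hint₂ : Integrable f₂ := integrable_of_integral_eq_one hf₂1
    have hsqrtm : Measurable fun z => Real.sqrt (f₁ z * f₂ z) := (hf₁m.mul hf₂m).sqrt
    have hsqrtint : Integrable (fun z => Real.sqrt (f₁ z * f₂ z)) := by
      refine ⟨hsqrtm.aestronglyMeasurable, ?_⟩
      rw [hasFiniteIntegral_iff_ofReal
        (Filter.Eventually.of_forall fun z => Real.sqrt_nonneg _)]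
      have : (∫⁻ z, ENNReal.ofReal (Real.sqrt (f₁ z * f₂ z))) = S := by
        refine lintegral_congr fun z => ?_
        rw [Real.sqrt_eq_rpow, ← ENNReal.ofReal_rpow_of_nonneg
          (mul_nonneg (hf₁0 z) (hf₂0 z)) half_nn, ENNReal.ofReal_mul (hf₁0 z)]
      rw [this, h1]
      exact ENNReal.one_lt_top
    have hhint : Integrable (fun z => f₁ z + f₂ z - 2 * Real.sqrt (f₁ z * f₂ z)) :=
      (hint₁.add hint₂).sub (hsqrtint.const_mul 2)
    have hhI : (∫ z, (f₁ z + f₂ z - 2 * Real.sqrt (f₁ z * f₂ z))) = 0 := by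
      have e1 : (∫ z, (f₁ z + f₂ z - 2 * Real.sqrt (f₁ z * f₂ z)))
          = (∫ z, (f₁ z + f₂ z)) - ∫ z, 2 * Real.sqrt (f₁ z * f₂ z) :=
        integral_sub (hint₁.add hint₂) (hsqrtint.const_mul 2)
      have e2 : (∫ z, (f₁ z + f₂ z)) = (∫ z, f₁ z) + ∫ z, f₂ z := integral_add hint₁ hint₂
      have e3 : (∫ z, 2 * Real.sqrt (f₁ z * f₂ z)) = 2 * ∫ z, Real.sqrt (f₁ z * f₂ z) :=
        integral_const_mul 2 _
      rw [e1, e2, e3, hf₁1, hf₂1, hfid1]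
      norm_num
    have hh0 : ∀ z, 0 ≤ f₁ z + f₂ z - 2 * Real.sqrt (f₁ z * f₂ z) := by
      intro z
      have hs : Real.sqrt (f₁ z * f₂ z) = Real.sqrt (f₁ z) * Real.sqrt (f₂ z) :=
        Real.sqrt_mul (hf₁0 z) _
      nlinarith [Real.sq_sqrt (hf₁0 z), Real.sq_sqrt (hf₂0 z),
        sq_nonneg (Real.sqrt (f₁ z) - Real.sqrt (f₂ z))]
    have hae := (integral_eq_zero_iff_of_nonneg hh0 hhint).mp hhI
    have heq : f₁ =ᵐ[volume] f₂ := by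
      filter_upwards [hae] with z hz
      have hz : f₁ z + f₂ z - 2 * Real.sqrt (f₁ z * f₂ z) = 0 := hz
      have hs : Real.sqrt (f₁ z * f₂ z) = Real.sqrt (f₁ z) * Real.sqrt (f₂ z) :=
        Real.sqrt_mul (hf₁0 z) _
      have h1' : Real.sqrt (f₁ z) = Real.sqrt (f₂ z) := by
        nlinarith [Real.sq_sqrt (hf₁0 z), Real.sq_sqrt (hf₂0 z),
          sq_nonneg (Real.sqrt (f₁ z) - Real.sqrt (f₂ z))]
      calc f₁ z = Real.sqrt (f₁ z) ^ 2 := (Real.sq_sqrt (hf₁0 z)).symm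
        _ = Real.sqrt (f₂ z) ^ 2 := by rw [h1']
        _ = f₂ z := Real.sq_sqrt (hf₂0 z)
    exact ⟨Or.inr hfid1, Or.inr heq⟩
end
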